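/- If v : Fin 5 → ℂ is nonzero, ∑ i, v i = 0, and there exists λ ∈ ℂ with d • v = λ • v, then v is a nonzero scalar multiple of one of the four vectors R₁, R₂, R₃, R₄. Moreover ∑ i, (R_m i)³ = 0 for m = 1, 2, 3, while ∑ i, (R₄ i)³ ≠ 0. (The 4-cycle d has exactly four projective fixed points on the hyperplane ∑ x_i = 0 in ℙ⁴, of which exactly R₁, R₂, R₃ lie on the Clebsch cubic surface.) -/

import Mathlib

/-- The 4-cycle `(1 2 4 3)` on `Fin 5`, fixing `0`. -/
def d : Equiv.Perm (Fin 5) := ([1, 2, 4, 3] : List (Fin 5)).formPerm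

/-- The linear action of a permutation `g` on vectors: `(g • v) i = v (g⁻¹ i)`. -/
def permSMul (g : Equiv.Perm (Fin 5)) (v : Fin 5 → ℂ) : Fin 5 → ℂ := fun i => v (g⁻¹ i)

def R₁ : Fin 5 → ℂ := ![0, -1, 1, 1, -1]
def R₂ : Fin 5 → ℂ := ![0, -Complex.I, -1, 1, Complex.I]
def R₃ : Fin 5 → ℂ := ![0, Complex.I, -1, 1, -Complex.I]
def R₄ : Fin 5 → ℂ := ![-4, 1, 1, 1, 1]

theorem stmt2 :
    (∀ v : Fin 5 → ℂ, v ≠ 0 → (∑ i, v i) = 0 →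
      (∃ lam : ℂ, permSMul d v = lam • v) →
      ∃ μ : ℂ, μ ≠ 0 ∧ (v = μ • R₁ ∨ v = μ • R₂ ∨ v = μ • R₃ ∨ v = μ • R₄)) ∧
    (∑ i, (R₁ i) ^ 3) = 0 ∧ (∑ i, (R₂ i) ^ 3) = 0 ∧ (∑ i, (R₃ i) ^ 3) = 0 ∧
    (∑ i, (R₄ i) ^ 3) ≠ 0 := by
  refine ⟨?_, ?_, ?_, ?_, ?_⟩
  · rintro v hv hs ⟨lam, heig⟩
    rw [Fin.sum_univ_five] at hs
    have key : ∀ i : Fin 5, v (d⁻¹ i) = lam * v i := fun i => congrFun heig i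
    have h0 : v 0 = lam * v 0 := by have := key 0; rwa [show d⁻¹ (0:Fin 5) = 0 by decide] at this
    have e1 : v 1 = lam * v 2 := by have := key 2; rwa [show d⁻¹ (2:Fin 5) = 1 by decide] at this
    have e2 : v 2 = lam * v 4 := by have := key 4; rwa [show d⁻¹ (4:Fin 5) = 2 by decide] at this
    have e3 : v 3 = lam * v 1 := by have := key 1; rwa [show d⁻¹ (1:Fin 5) = 3 by decide] at this
    have e4 : v 4 = lam * v 3 := by have := key 3; rwa [show d⁻¹ (3:Fin 5) = 4 by decide] at this
    by_cases hv1 : v 1 = 0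
    · exfalso
      have h3 : v 3 = 0 := by rw [e3, hv1, mul_zero]
      have h4 : v 4 = 0 := by rw [e4, h3, mul_zero]
      have h2 : v 2 = 0 := by rw [e2, h4, mul_zero]
      have h0' : v 0 = 0 := by linear_combination hs - hv1 - h2 - h3 - h4
      exact hv (funext fun i => by fin_cases i <;> assumption)
    · have hlam4 : lam ^ 4 = 1 := by
        have h : (lam ^ 4 - 1) * v 1 = 0 := by
          linear_combination -(e1 + lam * e2 + lam ^ 2 * e4 + lam ^ 3 * e3)
        rcases mul_eq_zero.mp h with h | h
        · linear_combination h
        · exact absurd h hv1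
      have hfac : (lam - 1) * (lam + 1) * (lam - Complex.I) * (lam + Complex.I) = 0 := by
        linear_combination hlam4 + (1 - lam ^ 2) * Complex.I_sq
      rcases mul_eq_zero.mp hfac with hfac | hI
      rcases mul_eq_zero.mp hfac with hfac | hmI
      rcases mul_eq_zero.mp hfac with h1 | hm1
      · -- lam = 1 : R₄
        have hl : lam = 1 := by linear_combination h1
        subst hl
        have h2 : v 2 = v 1 := by linear_combination -e1
        have h3 : v 3 = v 1 := by linear_combination e3
        have h4 : v 4 = v 1 := by linear_combination e4 + e3
        have h0' : v 0 = -4 * v 1 := by linear_combination hs - h2 - h3 - h4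
        exact ⟨v 1, hv1, Or.inr (Or.inr (Or.inr (by
          funext i; fin_cases i <;> simp [R₄, h0', h2, h3, h4] <;> ring)))⟩
      · -- lam = -1 : R₁
        have hl : lam = -1 := by linear_combination hm1
        subst hl
        have h2 : v 2 = -v 1 := by linear_combination e1
        have h3 : v 3 = -v 1 := by linear_combination e3
        have h4 : v 4 = v 1 := by linear_combination e4 - e3
        have h0' : v 0 = 0 := by linear_combination hs - h2 - h3 - h4
        refine ⟨-v 1, by simpa using hv1, Or.inl ?_⟩
        funext i; fin_cases i <;> simp [R₁, h0', h2, h3, h4] <;> ring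
      · -- lam = I : R₂
        have hl : lam = Complex.I := by linear_combination hmI
        subst hl
        have h3 : v 3 = Complex.I * v 1 := by linear_combination e3
        have h4 : v 4 = -v 1 := by
          linear_combination e4 + Complex.I * e3 + v 1 * Complex.I_sq
        have h2 : v 2 = -Complex.I * v 1 := by
          linear_combination Complex.I * e1 + v 2 * Complex.I_sq
        have h0' : v 0 = 0 := by linear_combination hs - h2 - h3 - h4
        refine ⟨Complex.I * v 1, by simp [hv1, Complex.I_ne_zero], Or.inr (Or.inl ?_)⟩
        funext i
        fin_cases i <;> simp [R₂, h0', h2, h3, h4] <;> ring_nf <;>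
          simp [Complex.I_sq] <;> ring
      · -- lam = -I : R₃
        have hl : lam = -Complex.I := by linear_combination hI
        subst hl
        have h3 : v 3 = -Complex.I * v 1 := by linear_combination e3
        have h4 : v 4 = -v 1 := by
          linear_combination e4 - Complex.I * e3 + v 1 * Complex.I_sq
        have h2 : v 2 = Complex.I * v 1 := by
          linear_combination -Complex.I * e1 + v 2 * Complex.I_sq
        have h0' : v 0 = 0 := by linear_combination hs - h2 - h3 - h4
        refine ⟨-Complex.I * v 1, by simp [hv1, Complex.I_ne_zero], Or.inr (Or.inr (Or.inl ?_))⟩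
        funext i
        fin_cases i <;> simp [R₃, h0', h2, h3, h4] <;> ring_nf <;>
          simp [Complex.I_sq] <;> ring
  · simp [R₁, Fin.sum_univ_five]; ring
  · simp [R₂, Fin.sum_univ_five]; linear_combination -Complex.I * Complex.I_sq
  · simp [R₃, Fin.sum_univ_five]; linear_combination -Complex.I * Complex.I_sq
  · simp [R₄, Fin.sum_univ_five]; norm_num
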